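/- Let n ≥ 4 and let A, B ⊆ {3,…,n} satisfy A ∩ B = ∅ and A ∪ B = {3,…,n}. Then the cut vectors of K_{2,n-2} satisfy δ_{{1}∪A | {2}∪B} + δ_{{1}∪B | {2}∪A} = δ_{∅ | [n]} + δ_{{1,2} | {3,…,n}} in ℤ^E. (Consequently the binomial q_{{1}∪A|{2}∪B}·q_{{1}∪B|{2}∪A} − q_{∅|[n]}·q_{{1,2}|{3,…,n}} lies in the cut ideal of K_{2,n-2}.) -/

import Mathlib

/-- The cut vector `δ_{A|B}` of the complete bipartite graph `K_{2,n-2}` on vertex set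
`Fin n` (vertices `0, 1` on one side, `2, …, n-1` on the other), as an element of `ℤ^E`.
The edge set `E` is indexed by `Fin 2 × Fin (n-2)`, the edge `(i, j)` joining vertex `i`
to vertex `j + 2`.  The coordinate at an edge `e` is `1` iff `|A ∩ e| = 1`, i.e. iff
exactly one endpoint of `e` lies in `A`; it only depends on the part `A` of the unordered
partition `A|B`. -/
def cutVec (n : ℕ) (A : Finset (Fin n)) : Fin 2 × Fin (n - 2) → ℤ :=
  fun e =>
    if ((⟨e.1.val, by have := e.1.isLt; have := e.2.isLt; omega⟩ : Fin n) ∈ A ↔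
        (⟨e.2.val + 2, by have := e.2.isLt; omega⟩ : Fin n) ∈ A) then 0 else 1

/-- For `A, B ⊆ {3, …, n}` with `A ∩ B = ∅` and `A ∪ B = {3, …, n}`, the cut
vectors of `K_{2,n-2}` satisfy
`δ_{{1}∪A|{2}∪B} + δ_{{1}∪B|{2}∪A} = δ_{∅|[n]} + δ_{{1,2}|{3,…,n}}` in `ℤ^E`.
(Vertex `1` of the paper is `⟨0, _⟩`, vertex `2` is `⟨1, _⟩`, and `{3, …, n}` is the set of
vertices with index `≥ 2` in `Fin n`.) -/
theorem cut_vector_relation_complement (n : ℕ) (hn : 4 ≤ n) (A B : Finset (Fin n))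
    (hA : A ⊆ Finset.univ.filter (fun v : Fin n => 2 ≤ v.val))
    (hB : B ⊆ Finset.univ.filter (fun v : Fin n => 2 ≤ v.val))
    (hAB : A ∩ B = ∅)
    (hABu : A ∪ B = Finset.univ.filter (fun v : Fin n => 2 ≤ v.val)) :
    cutVec n (insert ⟨0, by omega⟩ A) + cutVec n (insert ⟨0, by omega⟩ B)
      = cutVec n ∅ + cutVec n {⟨0, by omega⟩, ⟨1, by omega⟩} := by
  funext e
  obtain ⟨i, j⟩ := e
  have hjn : j.val + 2 < n := by have := j.isLt; omega
  set w : Fin n := ⟨j.val + 2, hjn⟩ with hw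
  have hw2 : 2 ≤ w.val := by simp [hw]
  -- membership facts
  have hmem : w ∈ A ∪ B := by
    rw [hABu]; simp [Finset.mem_filter, hw2]
  have hnot : ¬ (w ∈ A ∧ w ∈ B) := by
    intro h
    have : w ∈ A ∩ B := Finset.mem_inter.mpr h
    simp [hAB] at this
  have h0A : (⟨0, by omega⟩ : Fin n) ∉ A := by
    intro h; have := hA h; simp [Finset.mem_filter] at this
  have h0B : (⟨0, by omega⟩ : Fin n) ∉ B := by
    intro h; have := hB h; simp [Finset.mem_filter] at this
  have h1A : (⟨1, by omega⟩ : Fin n) ∉ A := by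
    intro h; have := hA h; simp [Finset.mem_filter] at this
  have h1B : (⟨1, by omega⟩ : Fin n) ∉ B := by
    intro h; have := hB h; simp [Finset.mem_filter] at this
  have hwne0 : w ≠ ⟨0, by omega⟩ := by
    intro h; apply_fun Fin.val at h; simp [hw] at h
  have hwne1 : w ≠ ⟨1, by omega⟩ := by
    intro h; apply_fun Fin.val at h; simp [hw] at h
  have hmem' : (w ∈ A ∧ w ∉ B) ∨ (w ∉ A ∧ w ∈ B) := by
    rcases Finset.mem_union.mp hmem with h | h
    · exact Or.inl ⟨h, fun hb => hnot ⟨h, hb⟩⟩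
    · exact Or.inr ⟨fun ha => hnot ⟨ha, h⟩, h⟩
  fin_cases i <;>
    simp only [Pi.add_apply, cutVec, Finset.mem_insert, Finset.notMem_empty] <;>
    rcases hmem' with ⟨ha, hb⟩ | ⟨ha, hb⟩ <;>
    simp_all [Fin.ext_iff] <;>
    simp [show ((⟨j.val + 2, hjn⟩ : Fin n) ∈ A) = (w ∈ A) from rfl,
      show ((⟨j.val + 2, hjn⟩ : Fin n) ∈ B) = (w ∈ B) from rfl, ha, hb]
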